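/- (Fault handler correctness, allowed case.) Let 𝓡 be a rule table and φ_𝓡 = genFaultHandler 𝓡 the compiled fault handler. Suppose ⊢_𝓡 (L_pc, ℓ₁, ℓ₂, ℓ₃) ⇝_opcode ⟨L_rpc, L_r⟩ and the cache input part is κ_i = [opcode, Tag(L_pc), Tag(ℓ₁), Tag(ℓ₂), Tag(ℓ₃)]. Then from the kernel-mode state with cache (κ_i, κ_o), user memory μ, stack (pc, user); σ, and pc 0@T_D, the machine running φ_𝓡 executes entirely in kernel mode and reaches the user-mode state with cache (κ_i, (Tag(L_rpc), Tag(L_r))), memory μ, stack σ, and program counter pc. -/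

import Mathlib

/-! ### Generic machines, traces, refinement, observation, TINI -/

/-- A generic machine: states, events, inputs, a step relation (with optional
event; `none` is the silent action τ), and an initialization function. -/
structure Machine (S E I : Type) where
  step : S → Option E → S → Prop
  init : I → S

/-- `Traces step s t s'`: the machine runs from `s` to `s'` emitting the
(non-silent) events collected in the list `t`. -/
inductive Traces {S E : Type} (step : S → Option E → S → Prop) : S → List E → S → Prop
  | nil (s : S) : Traces step s [] s
  | event {s₁ s₂ s₃ : S} {e : E} {t : List E} :
      step s₁ (some e) s₂ → Traces step s₂ t s₃ → Traces step s₁ (e :: t) s₃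
  | silent {s₁ s₂ s₃ : S} {t : List E} :
      step s₁ none s₂ → Traces step s₂ t s₃ → Traces step s₁ t s₃

/-- `Emits step s t`: from `s` the machine can emit the trace `t`. -/
def Emits {S E : Type} (step : S → Option E → S → Prop) (s : S) (t : List E) : Prop :=
  ∃ s', Traces step s t s'

/-- Refinement of `M₁` into `M₂` via relations on inputs and events. -/
def Refinement {S₁ E₁ I₁ S₂ E₂ I₂ : Type} (M₁ : Machine S₁ E₁ I₁) (M₂ : Machine S₂ E₂ I₂)
    (Ri : I₁ → I₂ → Prop) (Re : E₁ → E₂ → Prop) : Prop :=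
  ∀ i₁ i₂ t₂, Ri i₁ i₂ → Emits M₂.step (M₂.init i₂) t₂ →
    ∃ t₁, Emits M₁.step (M₁.init i₁) t₁ ∧ List.Forall₂ Re t₁ t₂

/-- Refinement via states. -/
def StateRefinement {S₁ E₁ I₁ S₂ E₂ I₂ : Type} (M₁ : Machine S₁ E₁ I₁) (M₂ : Machine S₂ E₂ I₂)
    (Rs : S₁ → S₂ → Prop) (Re : E₁ → E₂ → Prop) : Prop :=
  ∀ s₁ s₂ t₂, Rs s₁ s₂ → Emits M₂.step s₂ t₂ →
    ∃ t₁, Emits M₁.step s₁ t₁ ∧ List.Forall₂ Re t₁ t₂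

open Classical in
/-- Filter the unobservable events out of a trace. -/
noncomputable def filterObs {E : Type} (obs : E → Prop) : List E → List E
  | [] => []
  | e :: t => if obs e then e :: filterObs obs t else filterObs obs t

/-- Indistinguishability of traces: pairwise equal up to the length of the shorter. -/
inductive IndistTrace {E : Type} : List E → List E → Prop
  | nilL (t : List E) : IndistTrace [] t
  | nilR (t : List E) : IndistTrace t []
  | cons (e : E) {t₁ t₂ : List E} : IndistTrace t₁ t₂ → IndistTrace (e :: t₁) (e :: t₂)

/-- Observability of actions: silent actions are never observable. -/
def ObsAct {E : Type} (obs : E → Prop) (α : Option E) : Prop :=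
  ∃ e, α = some e ∧ obs e

/-- Indistinguishability of actions: equal, or both unobservable. -/
def ActIndist {E : Type} (obs : E → Prop) (α₁ α₂ : Option E) : Prop :=
  α₁ = α₂ ∨ (¬ ObsAct obs α₁ ∧ ¬ ObsAct obs α₂)

/-- Indistinguishability of events: equal, or both unobservable. -/
def EvIndist {E : Type} (obs : E → Prop) (e₁ e₂ : E) : Prop :=
  e₁ = e₂ ∨ (¬ obs e₁ ∧ ¬ obs e₂)

/-- Termination-insensitive noninterference for a machine with a notion of
observation `(Ω, obsE, indistI)`. -/
def TINI {S E I Ω : Type} (M : Machine S E I)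
    (obsE : Ω → E → Prop) (indistI : Ω → I → I → Prop) : Prop :=
  ∀ o i₁ i₂ t₁ t₂, indistI o i₁ i₂ →
    Emits M.step (M.init i₁) t₁ → Emits M.step (M.init i₂) t₂ →
    IndistTrace (filterObs (obsE o) t₁) (filterObs (obsE o) t₂)

/-! ### The abstract IFC machine -/

/-- Labeled atoms: an integer payload together with an IFC label. -/
structure Atom (L : Type) where
  val : ℤ
  lab : L

/-- The instruction set (shared by all machines). -/
inductive Instr : Type where
  | add
  | push (m : ℤ)
  | load
  | store
  | jump
  | bnz (k : ℤ)
  | call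
  | ret
  | output

/-- Instruction memories. -/
abbrev InstrMem : Type := ℤ → Option Instr

/-- Stack elements: data atoms or return frames. -/
inductive StkElt (L : Type) : Type where
  | data : Atom L → StkElt L
  | ret : Atom L → StkElt L

/-- Abstract machine states: data memory, stack, program counter. -/
structure AState (L : Type) where
  mem : ℤ → Option (Atom L)
  stk : List (StkElt L)
  pc : Atom L

/-- Memory update. -/
def updMem {L : Type} (μ : ℤ → Option (Atom L)) (p : ℤ) (a : Atom L) :
    ℤ → Option (Atom L) :=
  fun q => if q = p then some a else μ q

section Abstract

variable {L : Type} [SemilatticeSup L] [OrderBot L]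

/-- The step relation of the abstract IFC machine, with fixed instruction
memory `ι`.  Actions are `Option (Atom L)`: `none` is silent, `some a` emits
the event `a`. -/
inductive AStep (ι : InstrMem) : AState L → Option (Atom L) → AState L → Prop
  | add {μ : ℤ → Option (Atom L)} {σ : List (StkElt L)} {n n₁ n₂ : ℤ} {Lpc L₁ L₂ : L} :
      ι n = some .add →
      AStep ι ⟨μ, .data ⟨n₁, L₁⟩ :: .data ⟨n₂, L₂⟩ :: σ, ⟨n, Lpc⟩⟩ none
              ⟨μ, .data ⟨n₁ + n₂, L₁ ⊔ L₂⟩ :: σ, ⟨n + 1, Lpc⟩⟩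
  | push {μ : ℤ → Option (Atom L)} {σ : List (StkElt L)} {n m : ℤ} {Lpc : L} :
      ι n = some (.push m) →
      AStep ι ⟨μ, σ, ⟨n, Lpc⟩⟩ none ⟨μ, .data ⟨m, ⊥⟩ :: σ, ⟨n + 1, Lpc⟩⟩
  | load {μ : ℤ → Option (Atom L)} {σ : List (StkElt L)} {n p m : ℤ} {Lpc L₁ L₂ : L} :
      ι n = some .load → μ p = some ⟨m, L₂⟩ →
      AStep ι ⟨μ, .data ⟨p, L₁⟩ :: σ, ⟨n, Lpc⟩⟩ none
              ⟨μ, .data ⟨m, L₁ ⊔ L₂⟩ :: σ, ⟨n + 1, Lpc⟩⟩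
  | store {μ : ℤ → Option (Atom L)} {σ : List (StkElt L)} {n p m k : ℤ}
      {Lpc L₁ L₂ L₃ : L} :
      ι n = some .store → μ p = some ⟨k, L₃⟩ → L₁ ⊔ Lpc ≤ L₃ →
      AStep ι ⟨μ, .data ⟨p, L₁⟩ :: .data ⟨m, L₂⟩ :: σ, ⟨n, Lpc⟩⟩ none
              ⟨updMem μ p ⟨m, L₁ ⊔ L₂ ⊔ Lpc⟩, σ, ⟨n + 1, Lpc⟩⟩
  | jump {μ : ℤ → Option (Atom L)} {σ : List (StkElt L)} {n n' : ℤ} {Lpc L₁ : L} :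
      ι n = some .jump →
      AStep ι ⟨μ, .data ⟨n', L₁⟩ :: σ, ⟨n, Lpc⟩⟩ none ⟨μ, σ, ⟨n', L₁ ⊔ Lpc⟩⟩
  | bnz {μ : ℤ → Option (Atom L)} {σ : List (StkElt L)} {n m k : ℤ} {Lpc L₁ : L} :
      ι n = some (.bnz k) →
      AStep ι ⟨μ, .data ⟨m, L₁⟩ :: σ, ⟨n, Lpc⟩⟩ none
              ⟨μ, σ, ⟨n + (if m = 0 then 1 else k), L₁ ⊔ Lpc⟩⟩
  | call {μ : ℤ → Option (Atom L)} {σ : List (StkElt L)} {n n' : ℤ} {Lpc L₁ : L} :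
      ι n = some .call →
      AStep ι ⟨μ, .data ⟨n', L₁⟩ :: σ, ⟨n, Lpc⟩⟩ none
              ⟨μ, .ret ⟨n + 1, Lpc⟩ :: σ, ⟨n', L₁ ⊔ Lpc⟩⟩
  | ret {μ : ℤ → Option (Atom L)} {σ : List (StkElt L)} {n : ℤ} {Lpc : L} {pc' : Atom L} :
      ι n = some .ret →
      AStep ι ⟨μ, .ret pc' :: σ, ⟨n, Lpc⟩⟩ none ⟨μ, σ, pc'⟩
  | output {μ : ℤ → Option (Atom L)} {σ : List (StkElt L)} {n m : ℤ} {Lpc L₁ : L} :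
      ι n = some .output →
      AStep ι ⟨μ, .data ⟨m, L₁⟩ :: σ, ⟨n, Lpc⟩⟩ (some ⟨m, L₁ ⊔ Lpc⟩)
              ⟨μ, σ, ⟨n + 1, Lpc⟩⟩

/-- Indistinguishability of atoms at observer `o`: equal, or both unobservable. -/
def AtomIndist (o : L) (a₁ a₂ : Atom L) : Prop :=
  a₁ = a₂ ∨ (¬ a₁.lab ≤ o ∧ ¬ a₂.lab ≤ o)

/-- Pointwise indistinguishability of memories. -/
def MemIndist (o : L) (μ₁ μ₂ : ℤ → Option (Atom L)) : Prop :=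
  ∀ p, Option.Rel (AtomIndist o) (μ₁ p) (μ₂ p)

/-- Indistinguishability of stack elements: data matches data, return frames
match return frames, componentwise. -/
inductive EltIndist (o : L) : StkElt L → StkElt L → Prop
  | data {a₁ a₂ : Atom L} : AtomIndist o a₁ a₂ → EltIndist o (.data a₁) (.data a₂)
  | ret {a₁ a₂ : Atom L} : AtomIndist o a₁ a₂ → EltIndist o (.ret a₁) (.ret a₂)

open Classical in
/-- Stack filtering: drop data atoms and unobservable return frames, keeping the
whole remaining stack at the first observable return frame. -/
noncomputable def stkFilter (o : L) : List (StkElt L) → List (StkElt L)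
  | [] => []
  | .data _ :: σ => stkFilter o σ
  | .ret a :: σ => if a.lab ≤ o then .ret a :: σ else stkFilter o σ

/-- A state is observable when the label of its pc flows to the observer. -/
def StateObs (o : L) (s : AState L) : Prop := s.pc.lab ≤ o

/-- Indistinguishability of abstract machine states. -/
def StateIndist (o : L) (s₁ s₂ : AState L) : Prop :=
  (s₁.pc.lab ≤ o ∧ s₂.pc.lab ≤ o ∧ s₁.pc = s₂.pc ∧
    List.Forall₂ (EltIndist o) s₁.stk s₂.stk ∧ MemIndist o s₁.mem s₂.mem) ∨
  (¬ s₁.pc.lab ≤ o ∧ ¬ s₂.pc.lab ≤ o ∧ MemIndist o s₁.mem s₂.mem ∧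
    List.Forall₂ (EltIndist o) (stkFilter o s₁.stk) (stkFilter o s₂.stk))

/-- Input data for the abstract machine: program, initial stack of atoms,
memory size, initial label. -/
structure AInput (L : Type) where
  prog : InstrMem
  args : List (Atom L)
  size : ℕ
  lab : L

/-- Initial state for the abstract machine: the program is loaded as the
instruction memory, the memory consists of `size` copies of `0 @ lab`, the
stack holds the arguments, and the pc is `0 @ lab`. -/
def aInit (i : AInput L) : InstrMem × AState L :=
  (i.prog,
   ⟨fun q => if 0 ≤ q ∧ q < (i.size : ℤ) then some ⟨0, i.lab⟩ else none,
    i.args.map .data, ⟨0, i.lab⟩⟩)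

/-- The abstract machine step relation as a generic machine step (the fixed
instruction memory is part of the state and is preserved). -/
def AStepP : (InstrMem × AState L) → Option (Atom L) → (InstrMem × AState L) → Prop :=
  fun s α s' => s'.1 = s.1 ∧ AStep s.1 s.2 α s'.2

/-- Indistinguishability of abstract inputs: same program, memory size and
initial label, pointwise indistinguishable argument lists. -/
def AInputIndist (o : L) (i₁ i₂ : AInput L) : Prop :=
  i₁.prog = i₂.prog ∧ i₁.size = i₂.size ∧ i₁.lab = i₂.lab ∧
  List.Forall₂ (AtomIndist o) i₁.args i₂.args

/-- The abstract IFC machine as a generic machine. -/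
def AMachine (L : Type) [SemilatticeSup L] [OrderBot L] :
    Machine (InstrMem × AState L) (Atom L) (AInput L) :=
  ⟨AStepP, aInit⟩

end Abstract

/-! ### The symbolic IFC rule machine -/

/-- Instruction opcodes. -/
inductive Opcode : Type where
  | add | push | load | store | jump | bnz | call | ret | output
deriving DecidableEq

/-- Label expressions of the symbolic IFC rule DSL. -/
inductive LExpr : Type where
  | bot
  | labPC
  | lab1
  | lab2
  | lab3
  | join : LExpr → LExpr → LExpr

/-- Boolean expressions of the symbolic IFC rule DSL. -/
inductive BExpr : Type where
  | tru
  | flows : LExpr → LExpr → BExpr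

/-- A symbolic IFC rule: an allow condition, an expression for the label of the
next pc, and an expression for the label of the result. -/
structure SRule : Type where
  allow : BExpr
  rpc : LExpr
  res : LExpr

/-- A symbolic IFC rule table assigns a rule to every opcode. -/
abbrev RuleTable : Type := Opcode → SRule

section Symbolic

variable {L : Type} [SemilatticeSup L] [OrderBot L]

/-- Evaluation of label expressions at an input tuple `ρ = (L_pc, ℓ₁, ℓ₂, ℓ₃)`. -/
def evalL (ρ : L × L × L × L) : LExpr → L
  | .bot => ⊥
  | .labPC => ρ.1
  | .lab1 => ρ.2.1
  | .lab2 => ρ.2.2.1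
  | .lab3 => ρ.2.2.2
  | .join e₁ e₂ => evalL ρ e₁ ⊔ evalL ρ e₂

/-- Evaluation of boolean expressions. -/
def evalB (ρ : L × L × L × L) : BExpr → Prop
  | .tru => True
  | .flows e₁ e₂ => evalL ρ e₁ ≤ evalL ρ e₂

/-- The IFC enforcement judgment `⊢_𝓡 ρ ⇝_op ⟨L_rpc, L_r⟩`. -/
def Judge (R : RuleTable) (ρ : L × L × L × L) (op : Opcode) (Lrpc Lr : L) : Prop :=
  evalB ρ (R op).allow ∧ evalL ρ (R op).rpc = Lrpc ∧ evalL ρ (R op).res = Lr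

/-- The step relation of the symbolic rule machine, parameterized by a rule
table `R` and a fixed instruction memory `ι`. -/
inductive QStep (R : RuleTable) (ι : InstrMem) :
    AState L → Option (Atom L) → AState L → Prop
  | add {μ : ℤ → Option (Atom L)} {σ : List (StkElt L)} {n n₁ n₂ : ℤ}
      {Lpc L₁ L₂ Lrpc Lr : L} :
      ι n = some .add → Judge R (Lpc, L₁, L₂, ⊥) .add Lrpc Lr →
      QStep R ι ⟨μ, .data ⟨n₁, L₁⟩ :: .data ⟨n₂, L₂⟩ :: σ, ⟨n, Lpc⟩⟩ none
                ⟨μ, .data ⟨n₁ + n₂, Lr⟩ :: σ, ⟨n + 1, Lrpc⟩⟩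
  | push {μ : ℤ → Option (Atom L)} {σ : List (StkElt L)} {n m : ℤ} {Lpc Lrpc Lr : L} :
      ι n = some (.push m) → Judge R (Lpc, ⊥, ⊥, ⊥) .push Lrpc Lr →
      QStep R ι ⟨μ, σ, ⟨n, Lpc⟩⟩ none ⟨μ, .data ⟨m, Lr⟩ :: σ, ⟨n + 1, Lrpc⟩⟩
  | load {μ : ℤ → Option (Atom L)} {σ : List (StkElt L)} {n p m : ℤ}
      {Lpc L₁ L₂ Lrpc Lr : L} :
      ι n = some .load → μ p = some ⟨m, L₂⟩ →
      Judge R (Lpc, L₁, L₂, ⊥) .load Lrpc Lr →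
      QStep R ι ⟨μ, .data ⟨p, L₁⟩ :: σ, ⟨n, Lpc⟩⟩ none
                ⟨μ, .data ⟨m, Lr⟩ :: σ, ⟨n + 1, Lrpc⟩⟩
  | store {μ : ℤ → Option (Atom L)} {σ : List (StkElt L)} {n p m k : ℤ}
      {Lpc L₁ L₂ L₃ Lrpc Lr : L} :
      ι n = some .store → μ p = some ⟨k, L₃⟩ →
      Judge R (Lpc, L₁, L₂, L₃) .store Lrpc Lr →
      QStep R ι ⟨μ, .data ⟨p, L₁⟩ :: .data ⟨m, L₂⟩ :: σ, ⟨n, Lpc⟩⟩ none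
                ⟨updMem μ p ⟨m, Lr⟩, σ, ⟨n + 1, Lrpc⟩⟩
  | jump {μ : ℤ → Option (Atom L)} {σ : List (StkElt L)} {n n' : ℤ}
      {Lpc L₁ Lrpc Lr : L} :
      ι n = some .jump → Judge R (Lpc, L₁, ⊥, ⊥) .jump Lrpc Lr →
      QStep R ι ⟨μ, .data ⟨n', L₁⟩ :: σ, ⟨n, Lpc⟩⟩ none ⟨μ, σ, ⟨n', Lrpc⟩⟩
  | bnz {μ : ℤ → Option (Atom L)} {σ : List (StkElt L)} {n m k : ℤ}
      {Lpc L₁ Lrpc Lr : L} :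
      ι n = some (.bnz k) → Judge R (Lpc, L₁, ⊥, ⊥) .bnz Lrpc Lr →
      QStep R ι ⟨μ, .data ⟨m, L₁⟩ :: σ, ⟨n, Lpc⟩⟩ none
                ⟨μ, σ, ⟨n + (if m = 0 then 1 else k), Lrpc⟩⟩
  | call {μ : ℤ → Option (Atom L)} {σ : List (StkElt L)} {n n' : ℤ}
      {Lpc L₁ Lrpc Lr : L} :
      ι n = some .call → Judge R (Lpc, L₁, ⊥, ⊥) .call Lrpc Lr →
      QStep R ι ⟨μ, .data ⟨n', L₁⟩ :: σ, ⟨n, Lpc⟩⟩ none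
                ⟨μ, .ret ⟨n + 1, Lr⟩ :: σ, ⟨n', Lrpc⟩⟩
  | ret {μ : ℤ → Option (Atom L)} {σ : List (StkElt L)} {n m : ℤ}
      {Lpc L₁ Lrpc Lr : L} :
      ι n = some .ret → Judge R (Lpc, L₁, ⊥, ⊥) .ret Lrpc Lr →
      QStep R ι ⟨μ, .ret ⟨m, L₁⟩ :: σ, ⟨n, Lpc⟩⟩ none ⟨μ, σ, ⟨m, Lrpc⟩⟩
  | output {μ : ℤ → Option (Atom L)} {σ : List (StkElt L)} {n m : ℤ}
      {Lpc L₁ Lrpc Lr : L} :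
      ι n = some .output → Judge R (Lpc, L₁, ⊥, ⊥) .output Lrpc Lr →
      QStep R ι ⟨μ, .data ⟨m, L₁⟩ :: σ, ⟨n, Lpc⟩⟩ (some ⟨m, Lr⟩)
                ⟨μ, σ, ⟨n + 1, Lrpc⟩⟩

/-- The symbolic rule machine step relation as a generic machine step (the
instruction memory is part of the state and preserved). -/
def QStepP (R : RuleTable) :
    (InstrMem × AState L) → Option (Atom L) → (InstrMem × AState L) → Prop :=
  fun s α s' => s'.1 = s.1 ∧ QStep R s.1 s.2 α s'.2

end Symbolic

/-- The rule table `𝓡^abs` corresponding to the IFC mechanism of the abstract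
machine. -/
def RabsTable : RuleTable
  | .add => ⟨.tru, .labPC, .join .lab1 .lab2⟩
  | .output => ⟨.tru, .labPC, .join .lab1 .labPC⟩
  | .push => ⟨.tru, .labPC, .bot⟩
  | .load => ⟨.tru, .labPC, .join .lab1 .lab2⟩
  | .store => ⟨.flows (.join .lab1 .labPC) .lab3, .labPC, .join (.join .lab1 .lab2) .labPC⟩
  | .jump => ⟨.tru, .join .lab1 .labPC, .bot⟩
  | .bnz => ⟨.tru, .join .lab1 .labPC, .bot⟩
  | .call => ⟨.tru, .join .lab1 .labPC, .labPC⟩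
  | .ret => ⟨.tru, .lab1, .bot⟩

/-! ### The concrete machine -/

/-- The default tag. -/
def TD : ℤ := -1

/-- Concrete atoms: an integer payload and an integer tag. -/
structure CAtom : Type where
  val : ℤ
  tag : ℤ
deriving DecidableEq

/-- Concrete stack elements: data atoms, or return frames saving a pc atom and
a privilege bit (`true` = kernel mode). -/
inductive CStkElt : Type where
  | data : CAtom → CStkElt
  | ret : CAtom → Bool → CStkElt

/-- Concrete machine states: privilege bit (`true` = kernel), kernel data
memory (whose first seven cells form the rule cache), user data memory, stack,
and pc. -/
structure CState : Type where
  priv : Bool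
  kmem : ℤ → Option CAtom
  umem : ℤ → Option CAtom
  stk : List CStkElt
  pc : CAtom

/-- Concrete memory update. -/
def updC (μ : ℤ → Option CAtom) (p : ℤ) (a : CAtom) : ℤ → Option CAtom :=
  fun q => if q = p then some a else μ q

/-- Integer encoding of opcodes. -/
def encOp : Opcode → ℤ
  | .add => 0 | .push => 1 | .load => 2 | .store => 3 | .jump => 4
  | .bnz => 5 | .call => 6 | .ret => 7 | .output => 8

/-- The input part of the rule cache holds the given opcode and tags. -/
def cacheIn (κ : ℤ → Option CAtom) (op Tpc T₁ T₂ T₃ : ℤ) : Prop :=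
  κ 0 = some ⟨op, TD⟩ ∧ κ 1 = some ⟨Tpc, TD⟩ ∧ κ 2 = some ⟨T₁, TD⟩ ∧
  κ 3 = some ⟨T₂, TD⟩ ∧ κ 4 = some ⟨T₃, TD⟩

/-- The output part of the rule cache holds the given result tags. -/
def cacheOut (κ : ℤ → Option CAtom) (Trpc Tr : ℤ) : Prop :=
  κ 5 = some ⟨Trpc, TD⟩ ∧ κ 6 = some ⟨Tr, TD⟩

/-- Install a faulting instruction's opcode and tags in the cache input part,
resetting the output part to default tags. -/
def installCache (κ : ℤ → Option CAtom) (op Tpc T₁ T₂ T₃ : ℤ) : ℤ → Option CAtom :=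
  fun q =>
    if q = 0 then some ⟨op, TD⟩ else if q = 1 then some ⟨Tpc, TD⟩
    else if q = 2 then some ⟨T₁, TD⟩ else if q = 3 then some ⟨T₂, TD⟩
    else if q = 4 then some ⟨T₃, TD⟩ else if q = 5 then some ⟨TD, TD⟩
    else if q = 6 then some ⟨TD, TD⟩ else κ q

/-- The step relation of the concrete machine, given a user instruction memory
`ι` and a kernel instruction memory `φ`.  In user mode (`priv = false`) an
instruction either hits in the rule cache and executes with the cached output
tags, or misses, stores its opcode and tags in the cache input, pushes a return
frame, and traps to kernel address 0.  In kernel mode (`priv = true`)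
instructions are fetched from `φ`, tags are ignored (`Load`/`Store` preserve the
tag of the datum), `Output` is forbidden, and `Ret` restores the saved pc and
privilege bit. -/
inductive CStep (ι φ : InstrMem) : CState → Option CAtom → CState → Prop
  -- user mode, cache hit
  | addH {κ μ : ℤ → Option CAtom} {σ : List CStkElt} {n n₁ n₂ Tpc T₁ T₂ Trpc Tr : ℤ} :
      ι n = some .add → cacheIn κ (encOp .add) Tpc T₁ T₂ TD → cacheOut κ Trpc Tr →
      CStep ι φ ⟨false, κ, μ, .data ⟨n₁, T₁⟩ :: .data ⟨n₂, T₂⟩ :: σ, ⟨n, Tpc⟩⟩ none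
                ⟨false, κ, μ, .data ⟨n₁ + n₂, Tr⟩ :: σ, ⟨n + 1, Trpc⟩⟩
  | pushH {κ μ : ℤ → Option CAtom} {σ : List CStkElt} {n m Tpc Trpc Tr : ℤ} :
      ι n = some (.push m) → cacheIn κ (encOp .push) Tpc TD TD TD → cacheOut κ Trpc Tr →
      CStep ι φ ⟨false, κ, μ, σ, ⟨n, Tpc⟩⟩ none
                ⟨false, κ, μ, .data ⟨m, Tr⟩ :: σ, ⟨n + 1, Trpc⟩⟩
  | loadH {κ μ : ℤ → Option CAtom} {σ : List CStkElt} {n p m Tpc T₁ T₂ Trpc Tr : ℤ} :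
      ι n = some .load → μ p = some ⟨m, T₂⟩ →
      cacheIn κ (encOp .load) Tpc T₁ T₂ TD → cacheOut κ Trpc Tr →
      CStep ι φ ⟨false, κ, μ, .data ⟨p, T₁⟩ :: σ, ⟨n, Tpc⟩⟩ none
                ⟨false, κ, μ, .data ⟨m, Tr⟩ :: σ, ⟨n + 1, Trpc⟩⟩
  | storeH {κ μ : ℤ → Option CAtom} {σ : List CStkElt} {n p m k Tpc T₁ T₂ T₃ Trpc Tr : ℤ} :
      ι n = some .store → μ p = some ⟨k, T₃⟩ →
      cacheIn κ (encOp .store) Tpc T₁ T₂ T₃ → cacheOut κ Trpc Tr →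
      CStep ι φ ⟨false, κ, μ, .data ⟨p, T₁⟩ :: .data ⟨m, T₂⟩ :: σ, ⟨n, Tpc⟩⟩ none
                ⟨false, κ, updC μ p ⟨m, Tr⟩, σ, ⟨n + 1, Trpc⟩⟩
  | jumpH {κ μ : ℤ → Option CAtom} {σ : List CStkElt} {n n' Tpc T₁ Trpc Tr : ℤ} :
      ι n = some .jump → cacheIn κ (encOp .jump) Tpc T₁ TD TD → cacheOut κ Trpc Tr →
      CStep ι φ ⟨false, κ, μ, .data ⟨n', T₁⟩ :: σ, ⟨n, Tpc⟩⟩ none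
                ⟨false, κ, μ, σ, ⟨n', Trpc⟩⟩
  | bnzH {κ μ : ℤ → Option CAtom} {σ : List CStkElt} {n m k Tpc T₁ Trpc Tr : ℤ} :
      ι n = some (.bnz k) → cacheIn κ (encOp .bnz) Tpc T₁ TD TD → cacheOut κ Trpc Tr →
      CStep ι φ ⟨false, κ, μ, .data ⟨m, T₁⟩ :: σ, ⟨n, Tpc⟩⟩ none
                ⟨false, κ, μ, σ, ⟨n + (if m = 0 then 1 else k), Trpc⟩⟩
  | callH {κ μ : ℤ → Option CAtom} {σ : List CStkElt} {n n' Tpc T₁ Trpc Tr : ℤ} :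
      ι n = some .call → cacheIn κ (encOp .call) Tpc T₁ TD TD → cacheOut κ Trpc Tr →
      CStep ι φ ⟨false, κ, μ, .data ⟨n', T₁⟩ :: σ, ⟨n, Tpc⟩⟩ none
                ⟨false, κ, μ, .ret ⟨n + 1, Tr⟩ false :: σ, ⟨n', Trpc⟩⟩
  | retH {κ μ : ℤ → Option CAtom} {σ : List CStkElt} {n m Tpc T₁ Trpc Tr : ℤ} :
      ι n = some .ret → cacheIn κ (encOp .ret) Tpc T₁ TD TD → cacheOut κ Trpc Tr →
      CStep ι φ ⟨false, κ, μ, .ret ⟨m, T₁⟩ false :: σ, ⟨n, Tpc⟩⟩ none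
                ⟨false, κ, μ, σ, ⟨m, Trpc⟩⟩
  | outputH {κ μ : ℤ → Option CAtom} {σ : List CStkElt} {n m Tpc T₁ Trpc Tr : ℤ} :
      ι n = some .output → cacheIn κ (encOp .output) Tpc T₁ TD TD → cacheOut κ Trpc Tr →
      CStep ι φ ⟨false, κ, μ, .data ⟨m, T₁⟩ :: σ, ⟨n, Tpc⟩⟩ (some ⟨m, Tr⟩)
                ⟨false, κ, μ, σ, ⟨n + 1, Trpc⟩⟩
  -- user mode, cache miss
  | addM {κ μ : ℤ → Option CAtom} {σ : List CStkElt} {n n₁ n₂ Tpc T₁ T₂ : ℤ} :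
      ι n = some .add → ¬ cacheIn κ (encOp .add) Tpc T₁ T₂ TD →
      CStep ι φ ⟨false, κ, μ, .data ⟨n₁, T₁⟩ :: .data ⟨n₂, T₂⟩ :: σ, ⟨n, Tpc⟩⟩ none
                ⟨true, installCache κ (encOp .add) Tpc T₁ T₂ TD, μ,
                 .ret ⟨n, Tpc⟩ false :: .data ⟨n₁, T₁⟩ :: .data ⟨n₂, T₂⟩ :: σ, ⟨0, TD⟩⟩
  | pushM {κ μ : ℤ → Option CAtom} {σ : List CStkElt} {n m Tpc : ℤ} :
      ι n = some (.push m) → ¬ cacheIn κ (encOp .push) Tpc TD TD TD →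
      CStep ι φ ⟨false, κ, μ, σ, ⟨n, Tpc⟩⟩ none
                ⟨true, installCache κ (encOp .push) Tpc TD TD TD, μ,
                 .ret ⟨n, Tpc⟩ false :: σ, ⟨0, TD⟩⟩
  | loadM {κ μ : ℤ → Option CAtom} {σ : List CStkElt} {n p m Tpc T₁ T₂ : ℤ} :
      ι n = some .load → μ p = some ⟨m, T₂⟩ →
      ¬ cacheIn κ (encOp .load) Tpc T₁ T₂ TD →
      CStep ι φ ⟨false, κ, μ, .data ⟨p, T₁⟩ :: σ, ⟨n, Tpc⟩⟩ none
                ⟨true, installCache κ (encOp .load) Tpc T₁ T₂ TD, μ,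
                 .ret ⟨n, Tpc⟩ false :: .data ⟨p, T₁⟩ :: σ, ⟨0, TD⟩⟩
  | storeM {κ μ : ℤ → Option CAtom} {σ : List CStkElt} {n p m k Tpc T₁ T₂ T₃ : ℤ} :
      ι n = some .store → μ p = some ⟨k, T₃⟩ →
      ¬ cacheIn κ (encOp .store) Tpc T₁ T₂ T₃ →
      CStep ι φ ⟨false, κ, μ, .data ⟨p, T₁⟩ :: .data ⟨m, T₂⟩ :: σ, ⟨n, Tpc⟩⟩ none
                ⟨true, installCache κ (encOp .store) Tpc T₁ T₂ T₃, μ,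
                 .ret ⟨n, Tpc⟩ false :: .data ⟨p, T₁⟩ :: .data ⟨m, T₂⟩ :: σ, ⟨0, TD⟩⟩
  | jumpM {κ μ : ℤ → Option CAtom} {σ : List CStkElt} {n n' Tpc T₁ : ℤ} :
      ι n = some .jump → ¬ cacheIn κ (encOp .jump) Tpc T₁ TD TD →
      CStep ι φ ⟨false, κ, μ, .data ⟨n', T₁⟩ :: σ, ⟨n, Tpc⟩⟩ none
                ⟨true, installCache κ (encOp .jump) Tpc T₁ TD TD, μ,
                 .ret ⟨n, Tpc⟩ false :: .data ⟨n', T₁⟩ :: σ, ⟨0, TD⟩⟩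
  | bnzM {κ μ : ℤ → Option CAtom} {σ : List CStkElt} {n m k Tpc T₁ : ℤ} :
      ι n = some (.bnz k) → ¬ cacheIn κ (encOp .bnz) Tpc T₁ TD TD →
      CStep ι φ ⟨false, κ, μ, .data ⟨m, T₁⟩ :: σ, ⟨n, Tpc⟩⟩ none
                ⟨true, installCache κ (encOp .bnz) Tpc T₁ TD TD, μ,
                 .ret ⟨n, Tpc⟩ false :: .data ⟨m, T₁⟩ :: σ, ⟨0, TD⟩⟩
  | callM {κ μ : ℤ → Option CAtom} {σ : List CStkElt} {n n' Tpc T₁ : ℤ} :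
      ι n = some .call → ¬ cacheIn κ (encOp .call) Tpc T₁ TD TD →
      CStep ι φ ⟨false, κ, μ, .data ⟨n', T₁⟩ :: σ, ⟨n, Tpc⟩⟩ none
                ⟨true, installCache κ (encOp .call) Tpc T₁ TD TD, μ,
                 .ret ⟨n, Tpc⟩ false :: .data ⟨n', T₁⟩ :: σ, ⟨0, TD⟩⟩
  | retM {κ μ : ℤ → Option CAtom} {σ : List CStkElt} {n m Tpc T₁ : ℤ} :
      ι n = some .ret → ¬ cacheIn κ (encOp .ret) Tpc T₁ TD TD →
      CStep ι φ ⟨false, κ, μ, .ret ⟨m, T₁⟩ false :: σ, ⟨n, Tpc⟩⟩ none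
                ⟨true, installCache κ (encOp .ret) Tpc T₁ TD TD, μ,
                 .ret ⟨n, Tpc⟩ false :: .ret ⟨m, T₁⟩ false :: σ, ⟨0, TD⟩⟩
  | outputM {κ μ : ℤ → Option CAtom} {σ : List CStkElt} {n m Tpc T₁ : ℤ} :
      ι n = some .output → ¬ cacheIn κ (encOp .output) Tpc T₁ TD TD →
      CStep ι φ ⟨false, κ, μ, .data ⟨m, T₁⟩ :: σ, ⟨n, Tpc⟩⟩ none
                ⟨true, installCache κ (encOp .output) Tpc T₁ TD TD, μ,
                 .ret ⟨n, Tpc⟩ false :: .data ⟨m, T₁⟩ :: σ, ⟨0, TD⟩⟩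
  -- kernel mode
  | addK {κ μ : ℤ → Option CAtom} {σ : List CStkElt} {n t v₁ t₁ v₂ t₂ : ℤ} :
      φ n = some .add →
      CStep ι φ ⟨true, κ, μ, .data ⟨v₁, t₁⟩ :: .data ⟨v₂, t₂⟩ :: σ, ⟨n, t⟩⟩ none
                ⟨true, κ, μ, .data ⟨v₁ + v₂, TD⟩ :: σ, ⟨n + 1, TD⟩⟩
  | pushK {κ μ : ℤ → Option CAtom} {σ : List CStkElt} {n m t : ℤ} :
      φ n = some (.push m) →
      CStep ι φ ⟨true, κ, μ, σ, ⟨n, t⟩⟩ none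
                ⟨true, κ, μ, .data ⟨m, TD⟩ :: σ, ⟨n + 1, TD⟩⟩
  | loadK {κ μ : ℤ → Option CAtom} {σ : List CStkElt} {n p tp t : ℤ} {a : CAtom} :
      φ n = some .load → κ p = some a →
      CStep ι φ ⟨true, κ, μ, .data ⟨p, tp⟩ :: σ, ⟨n, t⟩⟩ none
                ⟨true, κ, μ, .data a :: σ, ⟨n + 1, TD⟩⟩
  | storeK {κ μ : ℤ → Option CAtom} {σ : List CStkElt} {n p tp t : ℤ} {a : CAtom} :
      φ n = some .store →
      CStep ι φ ⟨true, κ, μ, .data ⟨p, tp⟩ :: .data a :: σ, ⟨n, t⟩⟩ none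
                ⟨true, updC κ p a, μ, σ, ⟨n + 1, TD⟩⟩
  | jumpK {κ μ : ℤ → Option CAtom} {σ : List CStkElt} {n n' t' t : ℤ} :
      φ n = some .jump →
      CStep ι φ ⟨true, κ, μ, .data ⟨n', t'⟩ :: σ, ⟨n, t⟩⟩ none
                ⟨true, κ, μ, σ, ⟨n', TD⟩⟩
  | bnzK {κ μ : ℤ → Option CAtom} {σ : List CStkElt} {n m k t' t : ℤ} :
      φ n = some (.bnz k) →
      CStep ι φ ⟨true, κ, μ, .data ⟨m, t'⟩ :: σ, ⟨n, t⟩⟩ none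
                ⟨true, κ, μ, σ, ⟨n + (if m = 0 then 1 else k), TD⟩⟩
  | callK {κ μ : ℤ → Option CAtom} {σ : List CStkElt} {n n' t' t : ℤ} :
      φ n = some .call →
      CStep ι φ ⟨true, κ, μ, .data ⟨n', t'⟩ :: σ, ⟨n, t⟩⟩ none
                ⟨true, κ, μ, .ret ⟨n + 1, TD⟩ true :: σ, ⟨n', TD⟩⟩
  | retK {κ μ : ℤ → Option CAtom} {σ : List CStkElt} {n t : ℤ} {a : CAtom} {π : Bool} :
      φ n = some .ret →
      CStep ι φ ⟨true, κ, μ, .ret a π :: σ, ⟨n, t⟩⟩ none ⟨π, κ, μ, σ, a⟩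

/-! ### Structured code generators and the IFC fault handler -/

def genFalse : List Instr := [.push 0]
def genTrue : List Instr := [.push 1]
def genSkipIf (n : ℕ) : List Instr := [.bnz ((n : ℤ) + 1)]
def genSkip (n : ℕ) : List Instr := genTrue ++ genSkipIf n
def genIf (t f : List Instr) : List Instr :=
  genSkipIf (f ++ genSkip t.length).length ++ (f ++ genSkip t.length) ++ t
def genLoadFrom (p : ℤ) : List Instr := [.push p, .load]
def genStoreAt (p : ℤ) : List Instr := [.push p, .store]
def genNot : List Instr := genIf genFalse genTrue
def genSome (c : List Instr) : List Instr := c ++ genTrue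
def genNone : List Instr := genFalse

/-- Addresses of the tags in the rule cache. -/
def addrOpLabel : ℤ := 0
def addrTagPC : ℤ := 1
def addrTag1 : ℤ := 2
def addrTag2 : ℤ := 3
def addrTag3 : ℤ := 4
def addrTagRpc : ℤ := 5
def addrTagR : ℤ := 6

/-- Compilation of label expressions, parameterized by the lattice-specific
generators `gb` (bottom) and `gj` (join). -/
def genELab (gb gj : List Instr) : LExpr → List Instr
  | .bot => gb
  | .labPC => genLoadFrom addrTagPC
  | .lab1 => genLoadFrom addrTag1
  | .lab2 => genLoadFrom addrTag2
  | .lab3 => genLoadFrom addrTag3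
  | .join e₁ e₂ => genELab gb gj e₂ ++ genELab gb gj e₁ ++ gj

/-- Compilation of boolean expressions, additionally parameterized by the
lattice-specific generator `gf` (flows). -/
def genBoolE (gb gj gf : List Instr) : BExpr → List Instr
  | .tru => genTrue
  | .flows e₁ e₂ => genELab gb gj e₂ ++ genELab gb gj e₁ ++ gf

/-- Compilation of a symbolic IFC rule. -/
def genApplyRule (gb gj gf : List Instr) (r : SRule) : List Instr :=
  genBoolE gb gj gf r.allow ++
  genIf (genSome (genELab gb gj r.rpc ++ genELab gb gj r.res)) genNone

/-- Guard generator: test whether the cache opcode equals (the encoding of) the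
given opcode. -/
def genMatchOp (op : Opcode) : List Instr :=
  [.push (-(encOp op))] ++ genLoadFrom addrOpLabel ++ [.add] ++ genNot

/-- All the opcodes. -/
def opcodes : List Opcode :=
  [.add, .output, .push, .load, .store, .jump, .bnz, .call, .ret]

/-- Nested case dispatch. -/
def genIndexedCases (genDefault : List Instr) (genGuard genBody : Opcode → List Instr) :
    List Opcode → List Instr
  | [] => genDefault
  | op :: ops => genGuard op ++ genIf (genBody op) (genIndexedCases genDefault genGuard genBody ops)

/-- First phase of the fault handler: dispatch on the opcode and apply the
corresponding symbolic rule. -/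
def genComputeResults (gb gj gf : List Instr) (R : RuleTable) : List Instr :=
  genIndexedCases [] genMatchOp (fun op => genApplyRule gb gj gf (R op)) opcodes

/-- Second phase of the fault handler: store the computed result tags into the
output part of the rule cache. -/
def genStoreResults : List Instr :=
  genIf (genStoreAt addrTagR ++ genStoreAt addrTagRpc ++ genTrue) genFalse

/-- The generated IFC fault handler. -/
def genFaultHandler (gb gj gf : List Instr) (R : RuleTable) : List Instr :=
  genComputeResults gb gj gf R ++ genStoreResults ++
  genIf [.ret] [.push (-1), .jump]

/-! ### Kernel-mode runs and Hoare triples -/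

/-- `PrivSteps ι φ s₁ s₂`: the machine runs from `s₁` to `s₂`, all states
strictly preceding `s₂` being in kernel mode (all such steps are silent). -/
inductive PrivSteps (ι φ : InstrMem) : CState → CState → Prop
  | refl (s : CState) : PrivSteps ι φ s s
  | step {s₁ s₂ s₃ : CState} :
      s₁.priv = true → CStep ι φ s₁ none s₂ → PrivSteps ι φ s₂ s₃ →
      PrivSteps ι φ s₁ s₃

/-- `codeAt φ n c`: the instruction memory `φ` contains the code sequence `c`
starting at address `n`. -/
def codeAt (φ : InstrMem) (n : ℤ) (c : List Instr) : Prop :=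
  ∀ i : ℕ, i < c.length → φ (n + (i : ℤ)) = (c)[i]?

/-- Total-correctness Hoare triple for self-contained kernel code: if `φ`
contains `c` at the current pc and the kernel memory and stack satisfy `P`,
then the machine runs in kernel mode to the end of `c` with kernel memory and
stack satisfying `Q` (the user memory is untouched). -/
def HT (c : List Instr) (P Q : (ℤ → Option CAtom) → List CStkElt → Prop) : Prop :=
  ∀ (ι φ : InstrMem) (n : ℤ) (κ μ : ℤ → Option CAtom) (σ : List CStkElt),
    codeAt φ n c → P κ σ →
    ∃ κ' σ', Q κ' σ' ∧
      PrivSteps ι φ ⟨true, κ, μ, σ, ⟨n, TD⟩⟩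
                    ⟨true, κ', μ, σ', ⟨n + (c.length : ℤ), TD⟩⟩

/-! ### Concrete lattices -/

/-- A concrete lattice: an encoding of the labels of `L` as integer tags,
together with code sequences correctly implementing `⊥`, `⊔` and the test `≤`
on encoded tags (specified by total-correctness Hoare triples in
weakest-precondition style). -/
structure ConcreteLattice (L : Type) [SemilatticeSup L] [OrderBot L] where
  Tag : L → ℤ
  Lab : ℤ → L
  labTag : ∀ l : L, Lab (Tag l) = l
  genBot : List Instr
  genJoin : List Instr
  genFlows : List Instr
  botSpec : ∀ P : (ℤ → Option CAtom) → List CStkElt → Prop,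
    HT genBot (fun κ σ => P κ (.data ⟨Tag ⊥, TD⟩ :: σ)) P
  joinSpec : ∀ P : (ℤ → Option CAtom) → List CStkElt → Prop,
    HT genJoin
      (fun κ σ => ∃ (l₁ l₂ : L) (σ₀ : List CStkElt),
        σ = .data ⟨Tag l₁, TD⟩ :: .data ⟨Tag l₂, TD⟩ :: σ₀ ∧
        P κ (.data ⟨Tag (l₁ ⊔ l₂), TD⟩ :: σ₀)) P
  flowsSpec : ∀ P : (ℤ → Option CAtom) → List CStkElt → Prop,
    HT genFlows
      (fun κ σ => ∃ (l₁ l₂ : L) (σ₀ : List CStkElt),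
        σ = .data ⟨Tag l₁, TD⟩ :: .data ⟨Tag l₂, TD⟩ :: σ₀ ∧
        ∀ b : ℤ, (b ≠ 0 ↔ l₁ ≤ l₂) → P κ (.data ⟨b, TD⟩ :: σ₀)) P

section Concrete

variable {L : Type} [SemilatticeSup L] [OrderBot L]

/-- The IFC fault handler compiled from a rule table, using the code generators
of a concrete lattice. -/
def faultHandler (CL : ConcreteLattice L) (R : RuleTable) : List Instr :=
  genFaultHandler CL.genBot CL.genJoin CL.genFlows R

/-- The kernel instruction memory consisting of exactly the compiled fault
handler, installed starting at address 0. -/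
def handlerMem (CL : ConcreteLattice L) (R : RuleTable) : InstrMem :=
  fun q => if 0 ≤ q then (faultHandler CL R)[q.toNat]? else none

/-! ### The concrete machine as a generic machine, and matching relations -/

/-- Input data for the concrete machine. -/
structure CInput : Type where
  prog : InstrMem
  args : List CAtom
  size : ℕ
  tag : ℤ

/-- The initial rule cache, holding an illegal opcode so that the first user
instruction always faults. -/
def initCache : ℤ → Option CAtom :=
  fun q => if 0 ≤ q ∧ q ≤ 6 then some ⟨if q = 0 then -1 else TD, TD⟩ else none

/-- The initial state of the concrete machine: user mode, cache initialized
with an illegal opcode, user memory of `size` copies of `0 @ tag`, stack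
holding the arguments, pc `0 @ tag`. -/
def cInit (i : CInput) : InstrMem × CState :=
  (i.prog,
   ⟨false, initCache,
    fun q => if 0 ≤ q ∧ q < (i.size : ℤ) then some ⟨0, i.tag⟩ else none,
    i.args.map .data, ⟨0, i.tag⟩⟩)

/-- The concrete machine step relation as a generic machine step, with the
user program part of the state and the kernel memory `φ` fixed. -/
def CStepP (φ : InstrMem) :
    (InstrMem × CState) → Option CAtom → (InstrMem × CState) → Prop :=
  fun s α s' => s'.1 = s.1 ∧ CStep s.1 φ s.2 α s'.2

/-- Matching of events/atoms: the concrete atom is the `Tag`-image of the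
abstract one. -/
def matchAtomC (CL : ConcreteLattice L) (a : Atom L) (c : CAtom) : Prop :=
  c = ⟨a.val, CL.Tag a.lab⟩

/-- Matching of inputs: same program and memory size, tag-encoded arguments and
initial label. -/
def matchInputC (CL : ConcreteLattice L) (i : AInput L) (ic : CInput) : Prop :=
  ic.prog = i.prog ∧
  ic.args = i.args.map (fun a => ⟨a.val, CL.Tag a.lab⟩) ∧
  ic.size = i.size ∧ ic.tag = CL.Tag i.lab

/-- Matching of stack elements: data matches data, return frames match return
frames with the user privilege bit, componentwise `Tag`-encoded. -/
inductive MatchStk (CL : ConcreteLattice L) : StkElt L → CStkElt → Prop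
  | data {a : Atom L} {c : CAtom} :
      matchAtomC CL a c → MatchStk CL (.data a) (.data c)
  | ret {a : Atom L} {c : CAtom} :
      matchAtomC CL a c → MatchStk CL (.ret a) (.ret c false)

/-- Cache consistency `𝓡 ⊢ κ`: the rule cache never lies with respect to the
rule table `R`. -/
def CacheConsistent (CL : ConcreteLattice L) (R : RuleTable)
    (κ : ℤ → Option CAtom) : Prop :=
  ∀ (op : Opcode) (Lpc L₁ L₂ L₃ : L),
    cacheIn κ (encOp op) (CL.Tag Lpc) (CL.Tag L₁) (CL.Tag L₂) (CL.Tag L₃) →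
    ∃ Lrpc Lr : L, Judge R (Lpc, L₁, L₂, L₃) op Lrpc Lr ∧
      cacheOut κ (CL.Tag Lrpc) (CL.Tag Lr)

/-- Matching of symbolic-rule-machine states and concrete states (`≈ˢᶜ`). -/
def MatchState (CL : ConcreteLattice L) (R : RuleTable)
    (qs : AState L) (cs : CState) : Prop :=
  cs.priv = false ∧
  CacheConsistent CL R cs.kmem ∧
  (∀ p, Option.Rel (matchAtomC CL) (qs.mem p) (cs.umem p)) ∧
  List.Forall₂ (MatchStk CL) qs.stk cs.stk ∧
  cs.pc = ⟨qs.pc.val, CL.Tag qs.pc.lab⟩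

end Concrete


/-! ### Auxiliary machinery for the fault handler proof -/

section FHAux

lemma privSteps_trans {ι φ : InstrMem} {s₁ s₂ s₃ : CState}
    (h₁ : PrivSteps ι φ s₁ s₂) (h₂ : PrivSteps ι φ s₂ s₃) : PrivSteps ι φ s₁ s₃ := by
  induction h₁ with
  | refl => exact h₂
  | step hp hs _ ih => exact .step hp hs (ih h₂)

lemma codeAt_cons {φ : InstrMem} {n : ℤ} {i : Instr} {c : List Instr}
    (h : codeAt φ n (i :: c)) : φ n = some i ∧ codeAt φ (n + 1) c := by
  constructor
  · have := h 0 (by simp); simpa using this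
  · intro j hj
    have := h (j + 1) (by simpa using Nat.succ_lt_succ hj)
    rw [show n + 1 + (j : ℤ) = n + ((j + 1 : ℕ) : ℤ) by push_cast; ring]
    simpa using this

lemma codeAt_append {φ : InstrMem} {n : ℤ} {c₁ c₂ : List Instr}
    (h : codeAt φ n (c₁ ++ c₂)) :
    codeAt φ n c₁ ∧ codeAt φ (n + (c₁.length : ℤ)) c₂ := by
  constructor
  · intro i hi
    have := h i (by simp; omega)
    rwa [List.getElem?_append_left hi] at this
  · intro i hi
    have := h (c₁.length + i) (by simp; omega)
    rw [show n + (c₁.length : ℤ) + (i : ℤ) = n + ((c₁.length + i : ℕ) : ℤ) by push_cast; ring]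
    rw [this, List.getElem?_append_right (by omega)]
    congr 1
    omega

/-- Exact-state kernel runs of a self-contained code block. -/
def Runs (ι φ : InstrMem) (c : List Instr) (κ : ℤ → Option CAtom) (σ : List CStkElt)
    (κ' : ℤ → Option CAtom) (σ' : List CStkElt) : Prop :=
  ∀ (n : ℤ) (μ : ℤ → Option CAtom), codeAt φ n c →
    PrivSteps ι φ ⟨true, κ, μ, σ, ⟨n, TD⟩⟩ ⟨true, κ', μ, σ', ⟨n + (c.length : ℤ), TD⟩⟩

lemma runs_seq {ι φ : InstrMem} {c₁ c₂ : List Instr} {κ σ κ₁ σ₁ κ₂ σ₂}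
    (h₁ : Runs ι φ c₁ κ σ κ₁ σ₁) (h₂ : Runs ι φ c₂ κ₁ σ₁ κ₂ σ₂) :
    Runs ι φ (c₁ ++ c₂) κ σ κ₂ σ₂ := by
  intro n μ hc
  obtain ⟨hc₁, hc₂⟩ := codeAt_append hc
  have h := privSteps_trans (h₁ n μ hc₁) (h₂ _ μ hc₂)
  rw [show n + (c₁.length : ℤ) + (c₂.length : ℤ) = n + ((c₁ ++ c₂).length : ℤ) by
    simp; ring] at h
  exact h

lemma runs_single {ι φ : InstrMem} {i : Instr} {κ κ' : ℤ → Option CAtom} {σ σ' : List CStkElt}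
    (h : ∀ (n : ℤ) (μ : ℤ → Option CAtom), φ n = some i →
      CStep ι φ ⟨true, κ, μ, σ, ⟨n, TD⟩⟩ none ⟨true, κ', μ, σ', ⟨n + 1, TD⟩⟩) :
    Runs ι φ [i] κ σ κ' σ' := by
  intro n μ hc
  have hφ := (codeAt_cons hc).1
  have := PrivSteps.step rfl (h n μ hφ) (PrivSteps.refl _)
  simpa using this

lemma runs_push {ι φ : InstrMem} {κ : ℤ → Option CAtom} {σ : List CStkElt} (m : ℤ) :
    Runs ι φ [.push m] κ σ κ (.data ⟨m, TD⟩ :: σ) :=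
  runs_single fun _ _ hφ => CStep.pushK hφ

lemma runs_load {ι φ : InstrMem} {κ : ℤ → Option CAtom} {σ : List CStkElt}
    {p tp : ℤ} {a : CAtom} (h : κ p = some a) :
    Runs ι φ [.load] κ (.data ⟨p, tp⟩ :: σ) κ (.data a :: σ) :=
  runs_single fun _ _ hφ => CStep.loadK hφ h

lemma runs_store {ι φ : InstrMem} {κ : ℤ → Option CAtom} {σ : List CStkElt}
    {p tp : ℤ} {a : CAtom} :
    Runs ι φ [.store] κ (.data ⟨p, tp⟩ :: .data a :: σ) (updC κ p a) σ :=
  runs_single fun _ _ hφ => CStep.storeK hφ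

lemma runs_add {ι φ : InstrMem} {κ : ℤ → Option CAtom} {σ : List CStkElt}
    {v₁ t₁ v₂ t₂ : ℤ} :
    Runs ι φ [.add] κ (.data ⟨v₁, t₁⟩ :: .data ⟨v₂, t₂⟩ :: σ) κ (.data ⟨v₁ + v₂, TD⟩ :: σ) :=
  runs_single fun _ _ hφ => CStep.addK hφ

lemma length_genSkip (m : ℕ) : (genSkip m).length = 2 := rfl

lemma length_genIf (t f : List Instr) :
    (genIf t f).length = t.length + f.length + 3 := by
  simp [genIf, genSkipIf, genSkip, genTrue]
  omega

lemma runs_genIf {ι φ : InstrMem} {t f : List Instr} {κ σ κ' σ'} (b tb : ℤ)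
    (ht : b ≠ 0 → Runs ι φ t κ σ κ' σ')
    (hf : b = 0 → Runs ι φ f κ σ κ' σ') :
    Runs ι φ (genIf t f) κ (.data ⟨b, tb⟩ :: σ) κ' σ' := by
  intro n μ hc
  rw [show genIf t f =
      [Instr.bnz (((f ++ genSkip t.length).length : ℤ) + 1)] ++
        ((f ++ ([Instr.push 1] ++ [Instr.bnz ((t.length : ℤ) + 1)])) ++ t) from rfl] at hc
  obtain ⟨hc0, hc1⟩ := codeAt_append hc
  obtain ⟨hcF, hct⟩ := codeAt_append hc1
  obtain ⟨hcf, hcs⟩ := codeAt_append hcF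
  obtain ⟨hcp, hcb⟩ := codeAt_append hcs
  have hbnz : φ n = some (.bnz (((f ++ genSkip t.length).length : ℤ) + 1)) :=
    (codeAt_cons hc0).1
  have hpush : φ (n + 1 + (f.length : ℤ)) = some (.push 1) := by
    have := (codeAt_cons hcp).1
    simpa using this
  have hbnz2 : φ (n + 1 + (f.length : ℤ) + 1) = some (.bnz ((t.length : ℤ) + 1)) := by
    have := (codeAt_cons hcb).1
    simpa using this
  have hFlen : ((f ++ genSkip t.length).length : ℤ) = (f.length : ℤ) + 2 := by
    simp [genSkip, genTrue, genSkipIf]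
  by_cases hb : b = 0
  · -- take the false branch
    subst hb
    have step1 : CStep ι φ ⟨true, κ, μ, .data ⟨0, tb⟩ :: σ, ⟨n, TD⟩⟩ none
        ⟨true, κ, μ, σ, ⟨n + 1, TD⟩⟩ := by
      have := CStep.bnzK (ι := ι) (κ := κ) (μ := μ) (σ := σ) (m := 0) (t' := tb) (t := TD) hbnz
      simpa using this
    have runf := hf rfl (n + 1) μ hcf
    have step2 : CStep ι φ ⟨true, κ', μ, σ', ⟨n + 1 + (f.length : ℤ), TD⟩⟩ none
        ⟨true, κ', μ, .data ⟨1, TD⟩ :: σ', ⟨n + 1 + (f.length : ℤ) + 1, TD⟩⟩ :=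
      CStep.pushK hpush
    have step3 : CStep ι φ
        ⟨true, κ', μ, .data ⟨1, TD⟩ :: σ', ⟨n + 1 + (f.length : ℤ) + 1, TD⟩⟩ none
        ⟨true, κ', μ, σ', ⟨n + 1 + (f.length : ℤ) + 1 + ((t.length : ℤ) + 1), TD⟩⟩ := by
      have := CStep.bnzK (ι := ι) (κ := κ') (μ := μ) (σ := σ') (m := 1) (t' := TD) (t := TD) hbnz2
      simpa using this
    have all := PrivSteps.step rfl step1 (privSteps_trans runf
      (PrivSteps.step rfl step2 (PrivSteps.step rfl step3 (PrivSteps.refl _))))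
    rw [show n + 1 + (f.length : ℤ) + 1 + ((t.length : ℤ) + 1) =
      n + (((genIf t f).length : ℕ) : ℤ) by rw [length_genIf]; push_cast; ring] at all
    exact all
  · -- take the true branch
    have step1 : CStep ι φ ⟨true, κ, μ, .data ⟨b, tb⟩ :: σ, ⟨n, TD⟩⟩ none
        ⟨true, κ, μ, σ, ⟨n + ((f.length : ℤ) + 3), TD⟩⟩ := by
      have := CStep.bnzK (ι := ι) (κ := κ) (μ := μ) (σ := σ) (m := b) (t' := tb) (t := TD) hbnz
      rw [if_neg hb, hFlen] at this
      rw [show n + ((f.length : ℤ) + 3) = n + ((f.length : ℤ) + 2 + 1) by ring]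
      exact this
    have hct' : codeAt φ (n + ((f.length : ℤ) + 3)) t := by
      rw [show n + ((f.length : ℤ) + 3) =
        n + (([Instr.bnz (((f ++ genSkip t.length).length : ℤ) + 1)].length : ℕ) : ℤ) +
          (((f ++ ([Instr.push 1] ++ [Instr.bnz ((t.length : ℤ) + 1)])).length : ℕ) : ℤ) by
        simp; ring]
      exact hct
    have runt := ht hb (n + ((f.length : ℤ) + 3)) μ hct'
    have all := PrivSteps.step rfl step1 runt
    rw [show n + ((f.length : ℤ) + 3) + (t.length : ℤ) =
      n + (((genIf t f).length : ℕ) : ℤ) by rw [length_genIf]; push_cast; ring] at all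
    exact all

end FHAux


section FHLattice

variable {L : Type} [SemilatticeSup L] [OrderBot L] (CL : ConcreteLattice L)
variable {ι φ : InstrMem} {κ : ℤ → Option CAtom}

lemma runs_genBot {σ : List CStkElt} :
    Runs ι φ CL.genBot κ σ κ (.data ⟨CL.Tag ⊥, TD⟩ :: σ) := by
  intro n μ hc
  obtain ⟨κ', σ', ⟨h1, h2⟩, hst⟩ :=
    CL.botSpec (fun κ' σ' => κ' = κ ∧ σ' = .data ⟨CL.Tag ⊥, TD⟩ :: σ) ι φ n κ μ σ hc ⟨rfl, rfl⟩
  subst h1; subst h2; exact hst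

lemma runs_genJoin {σ : List CStkElt} (l₁ l₂ : L) :
    Runs ι φ CL.genJoin κ (.data ⟨CL.Tag l₁, TD⟩ :: .data ⟨CL.Tag l₂, TD⟩ :: σ) κ
      (.data ⟨CL.Tag (l₁ ⊔ l₂), TD⟩ :: σ) := by
  intro n μ hc
  obtain ⟨κ', σ', ⟨h1, h2⟩, hst⟩ :=
    CL.joinSpec (fun κ' σ' => κ' = κ ∧ σ' = .data ⟨CL.Tag (l₁ ⊔ l₂), TD⟩ :: σ) ι φ n κ μ _
      hc ⟨l₁, l₂, σ, rfl, rfl, rfl⟩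
  subst h1; subst h2; exact hst

lemma run_genFlows {σ : List CStkElt} (l₁ l₂ : L) (n : ℤ) (μ : ℤ → Option CAtom)
    (hc : codeAt φ n CL.genFlows) :
    ∃ b : ℤ, (b ≠ 0 ↔ l₁ ≤ l₂) ∧
      PrivSteps ι φ
        ⟨true, κ, μ, .data ⟨CL.Tag l₁, TD⟩ :: .data ⟨CL.Tag l₂, TD⟩ :: σ, ⟨n, TD⟩⟩
        ⟨true, κ, μ, .data ⟨b, TD⟩ :: σ, ⟨n + (CL.genFlows.length : ℤ), TD⟩⟩ := by
  obtain ⟨κ', σ', ⟨b, hb, h1, h2⟩, hst⟩ :=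
    CL.flowsSpec (fun κ' σ' => ∃ b : ℤ, (b ≠ 0 ↔ l₁ ≤ l₂) ∧ κ' = κ ∧
        σ' = .data ⟨b, TD⟩ :: σ) ι φ n κ μ _ hc
      ⟨l₁, l₂, σ, rfl, fun b hb => ⟨b, hb, rfl, rfl⟩⟩
  subst h1; subst h2; exact ⟨b, hb, hst⟩

variable {op : Opcode} {Lpc ℓ₁ ℓ₂ ℓ₃ : L}

lemma runs_genELab
    (hin : cacheIn κ (encOp op) (CL.Tag Lpc) (CL.Tag ℓ₁) (CL.Tag ℓ₂) (CL.Tag ℓ₃))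
    (e : LExpr) (σ : List CStkElt) :
    Runs ι φ (genELab CL.genBot CL.genJoin e) κ σ κ
      (.data ⟨CL.Tag (evalL (Lpc, ℓ₁, ℓ₂, ℓ₃) e), TD⟩ :: σ) := by
  induction e generalizing σ with
  | bot => exact runs_genBot CL
  | labPC => exact runs_seq (runs_push addrTagPC) (runs_load hin.2.1)
  | lab1 => exact runs_seq (runs_push addrTag1) (runs_load hin.2.2.1)
  | lab2 => exact runs_seq (runs_push addrTag2) (runs_load hin.2.2.2.1)
  | lab3 => exact runs_seq (runs_push addrTag3) (runs_load hin.2.2.2.2)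
  | join e₁ e₂ ih₁ ih₂ =>
      exact runs_seq (runs_seq (ih₂ σ) (ih₁ _)) (runs_genJoin CL _ _)

lemma run_genBoolE
    (hin : cacheIn κ (encOp op) (CL.Tag Lpc) (CL.Tag ℓ₁) (CL.Tag ℓ₂) (CL.Tag ℓ₃))
    (be : BExpr) (σ : List CStkElt) (n : ℤ) (μ : ℤ → Option CAtom)
    (hc : codeAt φ n (genBoolE CL.genBot CL.genJoin CL.genFlows be)) :
    ∃ b : ℤ, (b ≠ 0 ↔ evalB (Lpc, ℓ₁, ℓ₂, ℓ₃) be) ∧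
      PrivSteps ι φ ⟨true, κ, μ, σ, ⟨n, TD⟩⟩
        ⟨true, κ, μ, .data ⟨b, TD⟩ :: σ,
          ⟨n + ((genBoolE CL.genBot CL.genJoin CL.genFlows be).length : ℤ), TD⟩⟩ := by
  cases be with
  | tru =>
      refine ⟨1, by simp [evalB], ?_⟩
      exact runs_push (ι := ι) (φ := φ) 1 n μ hc
  | flows e₁ e₂ =>
      rw [show genBoolE CL.genBot CL.genJoin CL.genFlows (.flows e₁ e₂) =
        (genELab CL.genBot CL.genJoin e₂ ++ genELab CL.genBot CL.genJoin e₁) ++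
          CL.genFlows from rfl] at hc ⊢
      obtain ⟨hc1, hc2⟩ := codeAt_append hc
      have R1 := runs_seq (ι := ι) (runs_genELab CL hin e₂ σ) (runs_genELab CL hin e₁ _) n μ hc1
      obtain ⟨b, hb, hst⟩ := run_genFlows (ι := ι) CL (evalL (Lpc, ℓ₁, ℓ₂, ℓ₃) e₁)
        (evalL (Lpc, ℓ₁, ℓ₂, ℓ₃) e₂) _ μ hc2
      refine ⟨b, by simpa [evalB] using hb, ?_⟩
      have all := privSteps_trans R1 hst
      rw [show n + ((genELab CL.genBot CL.genJoin e₂ ++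
          genELab CL.genBot CL.genJoin e₁).length : ℤ) + ((CL.genFlows).length : ℤ) =
        n + (((genELab CL.genBot CL.genJoin e₂ ++ genELab CL.genBot CL.genJoin e₁) ++
          CL.genFlows).length : ℤ) by simp; ring] at all
      exact all

lemma runs_genApplyRule
    (hin : cacheIn κ (encOp op) (CL.Tag Lpc) (CL.Tag ℓ₁) (CL.Tag ℓ₂) (CL.Tag ℓ₃))
    {r : SRule} {Lrpc Lr : L}
    (hallow : evalB (Lpc, ℓ₁, ℓ₂, ℓ₃) r.allow)
    (hrpc : evalL (Lpc, ℓ₁, ℓ₂, ℓ₃) r.rpc = Lrpc)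
    (hres : evalL (Lpc, ℓ₁, ℓ₂, ℓ₃) r.res = Lr)
    (σ : List CStkElt) :
    Runs ι φ (genApplyRule CL.genBot CL.genJoin CL.genFlows r) κ σ κ
      (.data ⟨1, TD⟩ :: .data ⟨CL.Tag Lr, TD⟩ :: .data ⟨CL.Tag Lrpc, TD⟩ :: σ) := by
  intro n μ hc
  rw [show genApplyRule CL.genBot CL.genJoin CL.genFlows r =
    genBoolE CL.genBot CL.genJoin CL.genFlows r.allow ++
      genIf (genSome (genELab CL.genBot CL.genJoin r.rpc ++
        genELab CL.genBot CL.genJoin r.res)) genNone from rfl] at hc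
  obtain ⟨hc1, hc2⟩ := codeAt_append hc
  obtain ⟨b, hb, hst⟩ := run_genBoolE (ι := ι) CL hin r.allow σ n μ hc1
  have hbne : b ≠ 0 := hb.mpr hallow
  have Rt : Runs ι φ (genSome (genELab CL.genBot CL.genJoin r.rpc ++
      genELab CL.genBot CL.genJoin r.res)) κ σ κ
      (.data ⟨1, TD⟩ :: .data ⟨CL.Tag Lr, TD⟩ :: .data ⟨CL.Tag Lrpc, TD⟩ :: σ) := by
    rw [show genSome (genELab CL.genBot CL.genJoin r.rpc ++
        genELab CL.genBot CL.genJoin r.res) =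
      (genELab CL.genBot CL.genJoin r.rpc ++
        genELab CL.genBot CL.genJoin r.res) ++ [Instr.push 1] from rfl]
    have h1 := runs_genELab (ι := ι) (φ := φ) CL hin r.rpc σ
    rw [hrpc] at h1
    have h2 := runs_genELab (ι := ι) (φ := φ) CL hin r.res (.data ⟨CL.Tag Lrpc, TD⟩ :: σ)
    rw [hres] at h2
    exact runs_seq (runs_seq h1 h2) (runs_push 1)
  have Rif := runs_genIf (t := genSome (genELab CL.genBot CL.genJoin r.rpc ++
      genELab CL.genBot CL.genJoin r.res)) (f := genNone) b TD
    (fun _ => Rt) (fun h0 => absurd h0 hbne) _ μ hc2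
  have all := privSteps_trans hst Rif
  rw [show n + ((genBoolE CL.genBot CL.genJoin CL.genFlows r.allow).length : ℤ) +
      ((genIf (genSome (genELab CL.genBot CL.genJoin r.rpc ++
        genELab CL.genBot CL.genJoin r.res)) genNone).length : ℤ) =
    n + ((genBoolE CL.genBot CL.genJoin CL.genFlows r.allow ++
      genIf (genSome (genELab CL.genBot CL.genJoin r.rpc ++
        genELab CL.genBot CL.genJoin r.res)) genNone).length : ℤ) by simp; ring] at all
  exact all

lemma encOp_inj : ∀ a b : Opcode, encOp a = encOp b → a = b := by
  intro a b h
  cases a <;> cases b <;> first | rfl | (simp only [encOp] at h; omega)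

lemma runs_genMatchOp
    (hin : cacheIn κ (encOp op) (CL.Tag Lpc) (CL.Tag ℓ₁) (CL.Tag ℓ₂) (CL.Tag ℓ₃))
    (op' : Opcode) (σ : List CStkElt) :
    Runs ι φ (genMatchOp op') κ σ κ
      (.data ⟨if op = op' then 1 else 0, TD⟩ :: σ) := by
  rw [show genMatchOp op' = [Instr.push (-(encOp op'))] ++
      ([Instr.push addrOpLabel] ++ ([Instr.load] ++ ([Instr.add] ++
        genIf genFalse genTrue))) from rfl]
  refine runs_seq (runs_push _) (runs_seq (runs_push _)
    (runs_seq (runs_load hin.1) (runs_seq runs_add ?_)))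
  refine runs_genIf (encOp op + -encOp op') TD (fun hb => ?_) (fun hb => ?_)
  · have hne : op ≠ op' := fun h => hb (by rw [h]; ring)
    rw [if_neg hne]
    exact runs_push 0
  · have heq : op = op' := encOp_inj _ _ (by omega)
    rw [if_pos heq]
    exact runs_push 1

lemma runs_genCases
    (hin : cacheIn κ (encOp op) (CL.Tag Lpc) (CL.Tag ℓ₁) (CL.Tag ℓ₂) (CL.Tag ℓ₃))
    {body : Opcode → List Instr} {σ : List CStkElt} {κ' : ℤ → Option CAtom}
    {σ' : List CStkElt}
    (hbody : Runs ι φ (body op) κ σ κ' σ') :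
    ∀ ops : List Opcode, op ∈ ops →
      Runs ι φ (genIndexedCases [] genMatchOp body ops) κ σ κ' σ' := by
  intro ops
  induction ops with
  | nil => intro h; simp at h
  | cons op₀ ops ih =>
      intro hmem
      rw [show genIndexedCases [] genMatchOp body (op₀ :: ops) =
        genMatchOp op₀ ++ genIf (body op₀)
          (genIndexedCases [] genMatchOp body ops) from rfl]
      refine runs_seq (runs_genMatchOp CL hin op₀ σ)
        (runs_genIf _ TD (fun hb => ?_) (fun hb => ?_))
      · have heq : op = op₀ := by by_contra h; simp [h] at hb
        rw [← heq]
        exact hbody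
      · have hne : op ≠ op₀ := by intro h; simp [h] at hb
        exact ih (by
          rcases List.mem_cons.mp hmem with h | h
          · exact absurd h hne
          · exact h)

end FHLattice

lemma updC_comm {κ : ℤ → Option CAtom} {p q : ℤ} {a b : CAtom} (h : p ≠ q) :
    updC (updC κ p a) q b = updC (updC κ q b) p a := by
  funext x
  simp only [updC]
  split_ifs with h1 h2
  · exact absurd (h1 ▸ h2 ▸ rfl : p = q) (by omega)
  · rfl
  · rfl
  · rfl

/-- Fault handler correctness, allowed case: if the symbolic
IFC enforcement judgment allows the faulting instruction and the cache input
holds the corresponding opcode and tag-encoded labels, then the generated fault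
handler runs entirely in kernel mode, writes the tag encodings of the result
labels into the cache output, and returns to user mode at the saved pc with the
original stack and user memory. -/
theorem fault_handler_correct_allowed {L : Type} [SemilatticeSup L] [OrderBot L]
    (CL : ConcreteLattice L) (R : RuleTable) (ι φ : InstrMem)
    (hφ : codeAt φ 0 (faultHandler CL R))
    (op : Opcode) (Lpc ℓ₁ ℓ₂ ℓ₃ Lrpc Lr : L)
    (hjudge : Judge R (Lpc, ℓ₁, ℓ₂, ℓ₃) op Lrpc Lr)
    (κ μ : ℤ → Option CAtom) (σ : List CStkElt) (pc : CAtom)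
    (hin : cacheIn κ (encOp op) (CL.Tag Lpc) (CL.Tag ℓ₁) (CL.Tag ℓ₂) (CL.Tag ℓ₃)) :
    PrivSteps ι φ
      ⟨true, κ, μ, .ret pc false :: σ, ⟨0, TD⟩⟩
      ⟨false, updC (updC κ addrTagRpc ⟨CL.Tag Lrpc, TD⟩) addrTagR ⟨CL.Tag Lr, TD⟩,
       μ, σ, pc⟩ := by
  obtain ⟨hallow, hrpc, hres⟩ := hjudge
  have hφ' := hφ
  rw [show faultHandler CL R =
    (genComputeResults CL.genBot CL.genJoin CL.genFlows R ++ genStoreResults) ++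
      genIf [Instr.ret] [Instr.push (-1), Instr.jump] from rfl] at hφ'
  obtain ⟨hc12, hc3⟩ := codeAt_append hφ'
  obtain ⟨hc1, hc2⟩ := codeAt_append hc12
  -- Phase 1: compute the result tags
  have hmem : op ∈ opcodes := by cases op <;> simp [opcodes]
  have hbody := runs_genApplyRule (ι := ι) (φ := φ) CL hin hallow hrpc hres
    (.ret pc false :: σ)
  have Rc : Runs ι φ (genComputeResults CL.genBot CL.genJoin CL.genFlows R) κ
      (.ret pc false :: σ) κ
      (.data ⟨1, TD⟩ :: .data ⟨CL.Tag Lr, TD⟩ :: .data ⟨CL.Tag Lrpc, TD⟩ ::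
        .ret pc false :: σ) :=
    runs_genCases CL hin
      (body := fun o => genApplyRule CL.genBot CL.genJoin CL.genFlows (R o))
      hbody opcodes hmem
  -- Phase 2: store the result tags
  have Rs : Runs ι φ genStoreResults κ
      (.data ⟨1, TD⟩ :: .data ⟨CL.Tag Lr, TD⟩ :: .data ⟨CL.Tag Lrpc, TD⟩ ::
        .ret pc false :: σ)
      (updC (updC κ addrTagR ⟨CL.Tag Lr, TD⟩) addrTagRpc ⟨CL.Tag Lrpc, TD⟩)
      (.data ⟨1, TD⟩ :: .ret pc false :: σ) := by
    rw [show genStoreResults = genIf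
      ((([Instr.push addrTagR] ++ [Instr.store]) ++
        ([Instr.push addrTagRpc] ++ [Instr.store])) ++ [Instr.push 1]) genFalse from rfl]
    refine runs_genIf 1 TD (fun _ => ?_) (fun h => absurd h one_ne_zero)
    exact runs_seq (runs_seq (runs_seq (runs_push _) runs_store)
      (runs_seq (runs_push _) runs_store)) (runs_push 1)
  -- Phase 3: return to user mode
  set κ₂ := updC (updC κ addrTagR ⟨CL.Tag Lr, TD⟩) addrTagRpc ⟨CL.Tag Lrpc, TD⟩ with hκ₂
  set B := (0 : ℤ) +
    ((genComputeResults CL.genBot CL.genJoin CL.genFlows R).length : ℤ) +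
    ((genStoreResults).length : ℤ) with hB
  have hc3' : codeAt φ B (genIf [Instr.ret] [Instr.push (-1), Instr.jump]) := by
    rw [show B = (0 : ℤ) +
      ((genComputeResults CL.genBot CL.genJoin CL.genFlows R ++
        genStoreResults).length : ℤ) by rw [hB]; push_cast [List.length_append]; ring]
    exact hc3
  have hlist : genIf [Instr.ret] [Instr.push (-1), Instr.jump] =
      [Instr.bnz 5, Instr.push (-1), Instr.jump, Instr.push 1, Instr.bnz 2,
        Instr.ret] := by
    norm_num [genIf, genSkipIf, genSkip, genTrue]
  rw [hlist] at hc3'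
  obtain ⟨hbnz5, hrest⟩ := codeAt_cons hc3'
  have hret : φ (B + 5) = some Instr.ret := by
    have h := (codeAt_cons (codeAt_cons (codeAt_cons (codeAt_cons
      (codeAt_cons hrest).2).2).2).2).1
    rw [show B + 5 = B + 1 + 1 + 1 + 1 + 1 by ring]
    exact h
  have stepb : CStep ι φ
      ⟨true, κ₂, μ, .data ⟨1, TD⟩ :: .ret pc false :: σ, ⟨B, TD⟩⟩ none
      ⟨true, κ₂, μ, .ret pc false :: σ, ⟨B + 5, TD⟩⟩ := by
    have := CStep.bnzK (ι := ι) (κ := κ₂) (μ := μ) (σ := .ret pc false :: σ)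
      (m := 1) (t' := TD) (t := TD) hbnz5
    simpa using this
  have stepr : CStep ι φ ⟨true, κ₂, μ, .ret pc false :: σ, ⟨B + 5, TD⟩⟩ none
      ⟨false, κ₂, μ, σ, pc⟩ := CStep.retK hret
  have all := privSteps_trans (Rc 0 μ hc1)
    (privSteps_trans (Rs _ μ hc2)
      (PrivSteps.step rfl stepb (PrivSteps.step rfl stepr (PrivSteps.refl _))))
  rw [show updC (updC κ addrTagRpc ⟨CL.Tag Lrpc, TD⟩) addrTagR ⟨CL.Tag Lr, TD⟩ = κ₂ by
    rw [hκ₂]; exact updC_comm (by norm_num [addrTagRpc, addrTagR])]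
  exact all
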